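/- If Q is a probability mass function on W = {0,1}^4 satisfying the data-matching constraints sum_{w in W_x} Q(w) = P_{y,d|z}, and additionally satisfies the instrument-monotonicity constraint sum over w with (d0,d1)=(1,0) of Q(w) = 0, then for any i,j in {0,1}, the probability that (Y0,Y1) lies in {(i,j),(i,1-j),(1-i,j)} is at most min{1, P_{i,0|0} + P_{1-i,0|1} + P_{1-j,1|0} + P_{j,1|1}}. -/

import Mathlib

open Finset

abbrev W : Type := Fin 2 × Fin 2 × Fin 2 × Fin 2

/-- treatment received given instrument value z: d1 if z=1, d0 if z=0,
i.e. d = d1*z + d0*(1-z) for z ∈ {0,1}. -/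
def dsel (z : Fin 2) (w : W) : Fin 2 := if z = 1 then w.2.2.2 else w.2.2.1

/-- outcome given treatment d: y1 if d=1, y0 if d=0, i.e. y = y1*d + y0*(1-d). -/
def ysel (d : Fin 2) (w : W) : Fin 2 := if d = 1 then w.2.1 else w.1

/-- data-matching constraints: ∑_{w ∈ W_x} Q(w) = P_{y,d|z} for each x=(y,d,z). -/
def DataMatch (Q : W → ℝ) (P : Fin 2 → Fin 2 → Fin 2 → ℝ) : Prop :=
  ∀ y d z : Fin 2,
    ∑ w : W, (if dsel z w = d ∧ ysel d w = y then Q w else 0) = P y d z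

/-- Q is a probability mass function on W. -/
def IsPMF (Q : W → ℝ) : Prop := (∀ w : W, 0 ≤ Q w) ∧ ∑ w : W, Q w = 1

/-- P is a valid conditional distribution of (Y,D) given Z. -/
def PValid (P : Fin 2 → Fin 2 → Fin 2 → ℝ) : Prop :=
  (∀ y d z : Fin 2, 0 ≤ P y d z) ∧ ∀ z : Fin 2, ∑ y : Fin 2, ∑ d : Fin 2, P y d z = 1

/-- instrument monotonicity: no defiers, Q(y0,y1,1,0) = 0. -/
def Mono (Q : W → ℝ) : Prop := ∀ y0 y1 : Fin 2, Q (y0, y1, 1, 0) = 0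

theorem stmt_3 (P : Fin 2 → Fin 2 → Fin 2 → ℝ) (Q : W → ℝ)
    (hP : PValid P) (hQ : IsPMF Q) (hD : DataMatch Q P) (hM : Mono Q) (i j : Fin 2) :
    ∑ w : W, (if (w.1, w.2.1) ∈ ({(i, j), (i, 1 - j), (1 - i, j)} : Finset (Fin 2 × Fin 2))
        then Q w else 0) ≤
      min 1 (P i 0 0 + P (1 - i) 0 1 + P (1 - j) 1 0 + P j 1 1) := by
  obtain ⟨hQ0, hQ1⟩ := hQ
  have h000 := hD 0 0 0; have h001 := hD 0 0 1
  have h010 := hD 0 1 0; have h011 := hD 0 1 1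
  have h100 := hD 1 0 0; have h101 := hD 1 0 1
  have h110 := hD 1 1 0; have h111 := hD 1 1 1
  have m00 := hM 0 0; have m01 := hM 0 1; have m10 := hM 1 0; have m11 := hM 1 1
  simp only [dsel, ysel, Fintype.sum_prod_type, Fin.sum_univ_two] at h000 h001 h010 h011 h100 h101 h110 h111 hQ1 ⊢
  norm_num at h000 h001 h010 h011 h100 h101 h110 h111 hQ1 ⊢
  fin_cases i <;> fin_cases j <;> norm_num [Prod.ext_iff] <;>
    constructor <;>
    linarith [hQ0 (0,0,0,0), hQ0 (0,0,0,1), hQ0 (0,0,1,0), hQ0 (0,0,1,1),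
      hQ0 (0,1,0,0), hQ0 (0,1,0,1), hQ0 (0,1,1,0), hQ0 (0,1,1,1),
      hQ0 (1,0,0,0), hQ0 (1,0,0,1), hQ0 (1,0,1,0), hQ0 (1,0,1,1),
      hQ0 (1,1,0,0), hQ0 (1,1,0,1), hQ0 (1,1,1,0), hQ0 (1,1,1,1)]
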